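/- Let n ≥ 2 and suppose the differentiable functions {f_i}_{i=1}^n satisfy Δ_s-ED of size s and ζ-BGV. Fix s ∈ {1,…,n}, a point y ∈ E, and for every subset S ⊆ {1,…,n} with |S| = s a point x_S ∈ E. Then for every γ > 0: (1/C(n,s)) Σ_{S : |S|=s} [ f(x_S) − f_S(x_S) ] ≤ ((n − s)/(n − 1)) · γζ²/(2s) + (1/(2γ) + Δ_s/2) · (1/C(n,s)) Σ_{S : |S|=s} ‖x_S − y‖². -/

import Mathlib

open Finset RealInnerProductSpace


section Helpers

variable {E : Type*} [NormedAddCommGroup E] [InnerProductSpace ℝ E] [CompleteSpace E]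

lemma myGradSub {f₁ f₂ : E → ℝ} {g₁ g₂ x : E} (h₁ : HasGradientAt f₁ g₁ x)
    (h₂ : HasGradientAt f₂ g₂ x) :
    HasGradientAt (fun z => f₁ z - f₂ z) (g₁ - g₂) x := by
  rw [hasGradientAt_iff_hasFDerivAt] at *
  simpa using h₁.fun_sub h₂

lemma myGradConstMul {f : E → ℝ} {g x : E} (c : ℝ) (h : HasGradientAt f g x) :
    HasGradientAt (fun z => c * f z) (c • g) x := by
  rw [hasGradientAt_iff_hasFDerivAt] at *
  simpa [map_smul] using h.const_mul c

lemma myGradSum {ι : Type*} (t : Finset ι) (f : ι → E → ℝ) (g : ι → E) {x : E}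
    (h : ∀ i ∈ t, HasGradientAt (f i) (g i) x) :
    HasGradientAt (fun z => ∑ i ∈ t, f i z) (∑ i ∈ t, g i) x := by
  rw [hasGradientAt_iff_hasFDerivAt]
  have := HasFDerivAt.fun_sum (fun i hi => (hasGradientAt_iff_hasFDerivAt).1 (h i hi))
  simpa [map_sum] using this

lemma descent (φ : E → ℝ) (hφ : Differentiable ℝ φ) (L : ℝ)
    (hL : ∀ a b : E, ‖gradient φ a - gradient φ b‖ ≤ L * ‖a - b‖) (x y : E) :
    φ x ≤ φ y + ⟪gradient φ y, x - y⟫ + L / 2 * ‖x - y‖ ^ 2 := by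
  set d := x - y with hd
  set h : ℝ → ℝ := fun t => φ (y + t • d) - t * ⟪gradient φ y, d⟫ - L * ‖d‖ ^ 2 / 2 * t ^ 2 with hh
  have hline : ∀ t : ℝ, HasDerivAt (fun t : ℝ => y + t • d) d t := by
    intro t
    simpa using ((hasDerivAt_id t).smul_const d).const_add y
  have hder : ∀ t : ℝ, HasDerivAt h
      (⟪gradient φ (y + t • d), d⟫ - ⟪gradient φ y, d⟫ - L * ‖d‖ ^ 2 / 2 * (2 * t)) t := by
    intro t
    have hgrad : HasFDerivAt φ ((InnerProductSpace.toDual ℝ E) (gradient φ (y + t • d)))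
        (y + t • d) := (hasGradientAt_iff_hasFDerivAt).1 (hφ _).hasGradientAt
    have h1 : HasDerivAt (fun t : ℝ => φ (y + t • d)) ⟪gradient φ (y + t • d), d⟫ t := by
      have := hgrad.comp_hasDerivAt t (hline t)
      simpa [InnerProductSpace.toDual_apply_apply, Function.comp_def] using this
    have h2 : HasDerivAt (fun t : ℝ => t * ⟪gradient φ y, d⟫) ⟪gradient φ y, d⟫ t := by
      simpa using (hasDerivAt_id t).mul_const ⟪gradient φ y, d⟫
    have h3 : HasDerivAt (fun t : ℝ => L * ‖d‖ ^ 2 / 2 * t ^ 2) (L * ‖d‖ ^ 2 / 2 * (2 * t)) t := by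
      simpa [mul_comm] using (hasDerivAt_pow 2 t).const_mul (L * ‖d‖ ^ 2 / 2)
    exact (h1.sub h2).sub h3
  have key : h 1 ≤ h 0 := by
    have hanti : AntitoneOn h (Set.Icc 0 1) := by
      apply antitoneOn_of_deriv_nonpos (convex_Icc 0 1)
      · have hdh : Differentiable ℝ h := fun t => (hder t).differentiableAt
        exact hdh.continuous.continuousOn
      · intro t ht
        exact ((hder t).differentiableAt).differentiableWithinAt
      · intro t ht
        rw [interior_Icc] at ht
        rw [(hder t).deriv]
        have hcs : ⟪gradient φ (y + t • d) - gradient φ y, d⟫ ≤ L * t * ‖d‖ ^ 2 := by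
          calc ⟪gradient φ (y + t • d) - gradient φ y, d⟫
              ≤ ‖gradient φ (y + t • d) - gradient φ y‖ * ‖d‖ := real_inner_le_norm _ _
            _ ≤ L * ‖(y + t • d) - y‖ * ‖d‖ :=
                  mul_le_mul_of_nonneg_right (hL _ _) (norm_nonneg d)
            _ = L * t * ‖d‖ ^ 2 := by
                  rw [add_sub_cancel_left, norm_smul]
                  simp [Real.norm_eq_abs, abs_of_pos ht.1, sq]
                  ring
        rw [inner_sub_left] at hcs
        nlinarith [hcs]
    exact hanti (by norm_num) (by norm_num) (by norm_num)
  have h0 : h 0 = φ y := by simp [hh]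
  have h1 : h 1 = φ x - ⟪gradient φ y, d⟫ - L * ‖d‖ ^ 2 / 2 := by simp [hh, hd]
  rw [h0, h1] at key
  nlinarith [key]

lemma young (γ : ℝ) (hγ : 0 < γ) (a v : E) :
    ⟪a, v⟫ ≤ γ / 2 * ‖a‖ ^ 2 + 1 / (2 * γ) * ‖v‖ ^ 2 := by
  have key : 2 * γ * ⟪a, v⟫ ≤ γ ^ 2 * ‖a‖ ^ 2 + ‖v‖ ^ 2 := by
    nlinarith [real_inner_le_norm a v, sq_nonneg (γ * ‖a‖ - ‖v‖), norm_nonneg a, norm_nonneg v]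
  have h2γ : (0:ℝ) < 2 * γ := by positivity
  have heq : γ / 2 * ‖a‖ ^ 2 + 1 / (2 * γ) * ‖v‖ ^ 2
      = (γ ^ 2 * ‖a‖ ^ 2 + ‖v‖ ^ 2) / (2 * γ) := by
    field_simp
  rw [heq, le_div_iff₀ h2γ]
  linarith [key]

end Helpers

lemma count_supersets {α : Type*} [DecidableEq α] (U T : Finset α) (hTU : T ⊆ U) (s : ℕ)
    (hs : T.card ≤ s) :
    ((powersetCard s U).filter (fun S => T ⊆ S)).card = (U.card - T.card).choose (s - T.card) := by
  rw [show U.card - T.card = (U \ T).card from (card_sdiff_of_subset hTU).symm,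
    ← card_powersetCard (s - T.card) (U \ T)]
  apply card_bij' (fun S _ => S \ T) (fun A _ => A ∪ T)
  · intro S hS
    simp only [mem_filter, mem_powersetCard] at hS
    rw [mem_powersetCard]
    exact ⟨sdiff_subset_sdiff hS.1.1 Subset.rfl, by rw [card_sdiff_of_subset hS.2, hS.1.2]⟩
  · intro A hA
    rw [mem_powersetCard] at hA
    have hdisj : Disjoint A T := disjoint_of_subset_left hA.1 (sdiff_disjoint)
    simp only [mem_filter, mem_powersetCard]
    refine ⟨⟨union_subset (hA.1.trans sdiff_subset) hTU, ?_⟩, subset_union_right⟩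
    rw [card_union_of_disjoint hdisj, hA.2]
    omega
  · intro S hS
    simp only [mem_filter, mem_powersetCard] at hS
    exact sdiff_union_of_subset hS.2
  · intro A hA
    rw [mem_powersetCard] at hA
    exact union_sdiff_cancel_right (disjoint_of_subset_left hA.1 (sdiff_disjoint))

lemma sum_exchange1 {β M : Type*} [DecidableEq β] [AddCommMonoid M]
    (P : Finset (Finset β)) (U : Finset β) (hU : ∀ S ∈ P, S ⊆ U) (v : β → M) :
    ∑ S ∈ P, ∑ i ∈ S, v i
      = ∑ i ∈ U, (P.filter (fun S => i ∈ S)).card • v i := by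
  have h1 : ∀ S ∈ P, ∑ i ∈ S, v i = ∑ i ∈ U, if i ∈ S then v i else 0 := by
    intro S hS
    rw [Finset.sum_ite_mem, inter_eq_right.2 (hU S hS)]
  rw [Finset.sum_congr rfl h1, Finset.sum_comm]
  refine Finset.sum_congr rfl fun i _ => ?_
  rw [← Finset.sum_filter, Finset.sum_const]

lemma sum_exchange2 {β M : Type*} [DecidableEq β] [AddCommMonoid M]
    (P : Finset (Finset β)) (U : Finset β) (hU : ∀ S ∈ P, S ⊆ U) (w : β → β → M) :
    ∑ S ∈ P, ∑ i ∈ S, ∑ j ∈ S, w i j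
      = ∑ i ∈ U, ∑ j ∈ U, (P.filter (fun S => i ∈ S ∧ j ∈ S)).card • w i j := by
  have h1 : ∀ S ∈ P, ∑ i ∈ S, ∑ j ∈ S, w i j
      = ∑ i ∈ U, ∑ j ∈ U, if i ∈ S ∧ j ∈ S then w i j else 0 := by
    intro S hS
    symm
    have hrow : ∀ i, (∑ j ∈ U, if i ∈ S ∧ j ∈ S then w i j else 0)
        = if i ∈ S then ∑ j ∈ S, w i j else 0 := by
      intro i
      by_cases hi : i ∈ S
      · simp only [hi, true_and, if_true]
        rw [Finset.sum_ite_mem, inter_eq_right.2 (hU S hS)]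
      · simp [hi]
    rw [Finset.sum_congr rfl fun i _ => hrow i, Finset.sum_ite_mem,
      inter_eq_right.2 (hU S hS)]
  rw [Finset.sum_congr rfl h1, Finset.sum_comm]
  refine Finset.sum_congr rfl fun i _ => ?_
  rw [Finset.sum_comm]
  refine Finset.sum_congr rfl fun j _ => ?_
  rw [← Finset.sum_filter, Finset.sum_const]

lemma aux_choose (m k : ℕ) (hm1 : 1 ≤ m) (hk1 : 1 ≤ k) :
    m * (m - 1).choose (k - 1) = m.choose k * k := by
  have := Nat.add_one_mul_choose_eq (m - 1) (k - 1)
  rwa [show k - 1 + 1 = k from by omega, show m - 1 + 1 = m from by omega] at this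

set_option maxHeartbeats 1000000 in
/-- Bound on the averaged difference `f − f_S` under ED and BGV
(Lemma `thm:FunctionDiff-Lowerbound`). -/
theorem function_diff_lower_bound
    {E : Type*} [NormedAddCommGroup E] [InnerProductSpace ℝ E] [CompleteSpace E]
    (n : ℕ) (hn : 2 ≤ n)
    (f' : Fin n → E → ℝ) (hdiff : ∀ i, Differentiable ℝ (f' i))
    (f : E → ℝ) (hfdef : f = fun x => (1 / (n : ℝ)) * ∑ i, f' i x)
    (s : ℕ) (hs1 : 1 ≤ s) (hsn : s ≤ n)
    (Δs : ℝ)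
    (hED : ∀ S : Finset (Fin n), S.card = s → ∀ x y : E,
      ‖gradient (fun z => f z - (1 / (s : ℝ)) * ∑ j ∈ S, f' j z) x
        - gradient (fun z => f z - (1 / (s : ℝ)) * ∑ j ∈ S, f' j z) y‖
      ≤ Δs * ‖x - y‖)
    (ζ : ℝ)
    (hBGV : ∀ x : E,
      (1 / (n : ℝ)) * ∑ i, ‖gradient (f' i) x - gradient f x‖ ^ 2 ≤ ζ ^ 2)
    (y : E) (xS : Finset (Fin n) → E)
    (γ : ℝ) (hγ : 0 < γ) :
    (1 / (n.choose s : ℝ)) * ∑ S ∈ powersetCard s (univ : Finset (Fin n)),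
        (f (xS S) - (1 / (s : ℝ)) * ∑ i ∈ S, f' i (xS S))
      ≤ (((n : ℝ) - s) / ((n : ℝ) - 1)) * (γ * ζ ^ 2 / (2 * s))
        + (1 / (2 * γ) + Δs / 2) *
          ((1 / (n.choose s : ℝ)) * ∑ S ∈ powersetCard s (univ : Finset (Fin n)),
            ‖xS S - y‖ ^ 2) := by
  classical
  set P := powersetCard s (univ : Finset (Fin n)) with hPdef
  have hn0 : (0:ℝ) < n := by exact_mod_cast (by omega : 0 < n)
  have hs0 : (0:ℝ) < s := by exact_mod_cast hs1
  have hn2 : (2:ℝ) ≤ n := by exact_mod_cast hn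
  have hn1 : (0:ℝ) < (n:ℝ) - 1 := by linarith
  have hsnR : (s:ℝ) ≤ n := by exact_mod_cast hsn
  have hC0 : (0:ℝ) < n.choose s := by exact_mod_cast Nat.choose_pos hsn
  have hfd : Differentiable ℝ f := by
    rw [hfdef]
    exact (Differentiable.fun_sum fun i _ => hdiff i).const_mul _
  have hfy : HasGradientAt f (gradient f y) y := (hfd y).hasGradientAt
  set b : Fin n → E := fun i => gradient (f' i) y - gradient f y with hb
  -- sum of b is zero
  have hgradf : gradient f y = (1/(n:ℝ)) • ∑ i, gradient (f' i) y := by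
    have : HasGradientAt f ((1/(n:ℝ)) • ∑ i, gradient (f' i) y) y := by
      rw [hfdef]
      exact myGradConstMul _ (myGradSum univ _ _ (fun i _ => ((hdiff i) y).hasGradientAt))
    exact this.gradient
  have hb0 : ∑ i, b i = 0 := by
    simp only [hb]
    rw [Finset.sum_sub_distrib, Finset.sum_const, card_univ, Fintype.card_fin, hgradf,
      ← Nat.cast_smul_eq_nsmul ℝ, smul_smul,
      show ((n:ℝ) * (1/(n:ℝ))) = 1 from by field_simp, one_smul, sub_self]
  -- counting constants
  set K1 : ℕ := (n-1).choose (s-1) with hK1def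
  set K2 : ℕ := if s = 1 then 0 else (n-2).choose (s-2) with hK2def
  have hK1 : ∀ i : Fin n, (P.filter (fun S => i ∈ S)).card = K1 := by
    intro i
    have h := count_supersets univ {i} (subset_univ _) s (by simpa using hs1)
    simpa [card_univ] using h
  have hK2 : ∀ i j : Fin n, i ≠ j → (P.filter (fun S => i ∈ S ∧ j ∈ S)).card = K2 := by
    intro i j hij
    by_cases h1 : s = 1
    · rw [hK2def, if_pos h1]
      rw [Finset.card_eq_zero, Finset.filter_eq_empty_iff]
      rintro S hS ⟨hi, hj⟩
      have hcard : S.card = s := (mem_powersetCard.1 hS).2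
      have : 1 < S.card := Finset.one_lt_card.2 ⟨i, hi, j, hj, hij⟩
      omega
    · rw [hK2def, if_neg h1]
      have h := count_supersets univ {i, j} (subset_univ _) s
        (by rw [card_pair hij]; omega)
      rw [card_pair hij, card_univ, Fintype.card_fin] at h
      rw [← h]
      congr 1
      apply Finset.filter_congr
      intro S _
      simp [insert_subset_iff]
  have idAnat : K1 * n = n.choose s * s := by
    rw [mul_comm]; exact aux_choose n s (by omega) hs1
  have idA : (K1:ℝ) * n = (n.choose s : ℝ) * s := by exact_mod_cast idAnat
  have idB : (K2:ℝ) * ((n:ℝ) * ((n:ℝ)-1)) = (n.choose s : ℝ) * ((s:ℝ) * ((s:ℝ)-1)) := by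
    by_cases h1 : s = 1
    · subst h1; simp [hK2def]
    · have h2 : 2 ≤ s := by omega
      have hnat : (n-1) * (n-2).choose (s-2) = (n-1).choose (s-1) * (s-1) := by
        have := aux_choose (n-1) (s-1) (by omega) (by omega)
        rwa [show n-1-1 = n-2 from by omega, show s-1-1 = s-2 from by omega] at this
      have hreal : ((n:ℝ)-1) * (K2:ℝ) = (K1:ℝ) * ((s:ℝ)-1) := by
        rw [hK2def, if_neg h1, hK1def]
        have hcast : (((n-1) * (n-2).choose (s-2) : ℕ):ℝ)
            = (((n-1).choose (s-1) * (s-1) : ℕ):ℝ) := by exact_mod_cast hnat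
        push_cast [Nat.cast_sub (show 1 ≤ n by omega), Nat.cast_sub hs1] at hcast
        linarith [hcast]
      linear_combination (n:ℝ) * hreal + ((s:ℝ)-1) * idA
  have idC : ((K1:ℝ) - K2) * ((n:ℝ)*((n:ℝ)-1))
      = (n.choose s : ℝ) * ((s:ℝ) * ((n:ℝ)-(s:ℝ))) := by
    linear_combination ((n:ℝ)-1) * idA - idB
  have hK1K2 : (0:ℝ) ≤ (K1:ℝ) - K2 := by
    nlinarith [idC, mul_pos hn0 hn1,
      mul_nonneg (mul_nonneg hC0.le hs0.le) (sub_nonneg.2 hsnR)]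
  -- averaged f_S(y) vanishes
  have hPsub : ∀ S ∈ P, S ⊆ (univ : Finset (Fin n)) := fun S hS => (mem_powersetCard.1 hS).1
  have hfS_avg : ∑ S ∈ P, (f y - (1/(s:ℝ)) * ∑ i ∈ S, f' i y) = 0 := by
    have hT : ∑ S ∈ P, ∑ i ∈ S, f' i y = (K1:ℝ) * ∑ i, f' i y := by
      rw [sum_exchange1 P univ hPsub (fun i => f' i y)]
      rw [Finset.sum_congr rfl fun i _ => by rw [hK1 i, nsmul_eq_mul], ← Finset.mul_sum]
    rw [Finset.sum_sub_distrib, Finset.sum_const, ← Finset.mul_sum, hT]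
    rw [hPdef, card_powersetCard, card_univ, Fintype.card_fin, nsmul_eq_mul, hfdef]
    field_simp
    linear_combination (-(∑ i : Fin n, f' i y)) * idA
  -- variance identity
  have hvar : ∑ S ∈ P, ‖∑ j ∈ S, b j‖^2 = ((K1:ℝ) - K2) * ∑ i, ‖b i‖^2 := by
    have step1 : ∑ S ∈ P, ‖∑ j ∈ S, b j‖^2 = ∑ S ∈ P, ∑ i ∈ S, ∑ j ∈ S, ⟪b i, b j⟫ := by
      refine Finset.sum_congr rfl fun S _ => ?_
      rw [← real_inner_self_eq_norm_sq, sum_inner]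
      exact Finset.sum_congr rfl fun i _ => inner_sum _ _ _
    rw [step1, sum_exchange2 P univ hPsub]
    have hsplit : ∀ i j : Fin n, ((P.filter (fun S => i ∈ S ∧ j ∈ S)).card) • ⟪b i, b j⟫
        = (K2:ℝ) * ⟪b i, b j⟫ + (if i = j then ((K1:ℝ) - K2) * ⟪b i, b j⟫ else 0) := by
      intro i j
      by_cases hij : i = j
      · subst hij
        rw [if_pos rfl, show (P.filter (fun S => i ∈ S ∧ i ∈ S)) = (P.filter (fun S => i ∈ S))
          from by simp, hK1 i, nsmul_eq_mul]
        ring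
      · rw [hK2 i j hij, if_neg hij, nsmul_eq_mul]
        ring
    rw [Finset.sum_congr rfl fun i _ => Finset.sum_congr rfl fun j _ => hsplit i j]
    have e1 : ∑ i : Fin n, ∑ j : Fin n,
        ((K2:ℝ) * ⟪b i, b j⟫ + (if i = j then ((K1:ℝ) - K2) * ⟪b i, b j⟫ else 0))
        = (K2:ℝ) * (∑ i : Fin n, ∑ j : Fin n, ⟪b i, b j⟫)
          + ∑ i : Fin n, ((K1:ℝ) - K2) * ⟪b i, b i⟫ := by
      rw [Finset.mul_sum]
      rw [← Finset.sum_add_distrib]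
      refine Finset.sum_congr rfl fun i _ => ?_
      rw [Finset.sum_add_distrib, Finset.mul_sum]
      congr 1
      simp
    rw [e1]
    have e2 : ∑ i : Fin n, ∑ j : Fin n, ⟪b i, b j⟫ = 0 := by
      simp_rw [← inner_sum]
      rw [← sum_inner, hb0, inner_zero_left]
    rw [e2, mul_zero, zero_add, ← Finset.mul_sum]
    congr 1
    exact Finset.sum_congr rfl fun i _ => real_inner_self_eq_norm_sq _
  -- BGV bound
  have hB : (1/(n:ℝ)) * ∑ i, ‖b i‖^2 ≤ ζ^2 := by simpa only [hb] using hBGV y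
  have hBn : ∑ i, ‖b i‖^2 ≤ (n:ℝ) * ζ^2 := by
    have := mul_le_mul_of_nonneg_left hB hn0.le
    calc ∑ i, ‖b i‖^2 = (n:ℝ) * ((1/(n:ℝ)) * ∑ i, ‖b i‖^2) := by field_simp
      _ ≤ (n:ℝ) * ζ^2 := this
  -- per-subset bound
  have hper : ∀ S ∈ P, f (xS S) - (1/(s:ℝ)) * ∑ i ∈ S, f' i (xS S)
      ≤ (f y - (1/(s:ℝ)) * ∑ i ∈ S, f' i y)
        + γ/2 * ((1/(s:ℝ))^2 * ‖∑ j ∈ S, b j‖^2)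
        + (1/(2*γ) + Δs/2) * ‖xS S - y‖^2 := by
    intro S hS
    have hcard : S.card = s := (mem_powersetCard.1 hS).2
    set φ : E → ℝ := fun z => f z - (1/(s:ℝ)) * ∑ j ∈ S, f' j z with hφdef
    have hφdiff : Differentiable ℝ φ :=
      hfd.sub ((Differentiable.fun_sum fun j _ => hdiff j).const_mul _)
    have hdesc := descent φ hφdiff Δs (hED S hcard) (xS S) y
    have hgradφ : gradient φ y = gradient f y - (1/(s:ℝ)) • ∑ j ∈ S, gradient (f' j) y :=
      (myGradSub hfy (myGradConstMul _
        (myGradSum S _ _ fun j _ => ((hdiff j) y).hasGradientAt))).gradient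
    have hneg : gradient φ y = -((1/(s:ℝ)) • ∑ j ∈ S, b j) := by
      rw [hgradφ]
      simp only [hb, Finset.sum_sub_distrib, Finset.sum_const, hcard, smul_sub]
      have hc : (1/(s:ℝ)) • ((s:ℕ) • gradient f y) = gradient f y := by
        rw [← Nat.cast_smul_eq_nsmul ℝ, smul_smul,
          show (1/(s:ℝ)) * (s:ℝ) = 1 by field_simp, one_smul]
      rw [hc]
      abel
    have hnormφ : ‖gradient φ y‖^2 = (1/(s:ℝ))^2 * ‖∑ j ∈ S, b j‖^2 := by
      rw [hneg, norm_neg, norm_smul, Real.norm_eq_abs,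
        abs_of_pos (by positivity : (0:ℝ) < 1/(s:ℝ)), mul_pow]
    have hyoung := young γ hγ (gradient φ y) (xS S - y)
    show φ (xS S) ≤ φ y + γ/2 * ((1/(s:ℝ))^2 * ‖∑ j ∈ S, b j‖^2)
        + (1/(2*γ) + Δs/2) * ‖xS S - y‖^2
    rw [← hnormφ]
    linarith [hdesc, hyoung]
  -- assemble everything
  have hsum := Finset.sum_le_sum hper
  have hsplit2 : ∑ S ∈ P, ((f y - (1/(s:ℝ)) * ∑ i ∈ S, f' i y)
        + γ/2 * ((1/(s:ℝ))^2 * ‖∑ j ∈ S, b j‖^2)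
        + (1/(2*γ) + Δs/2) * ‖xS S - y‖^2)
      = γ/2 * ((1/(s:ℝ))^2 * (((K1:ℝ) - K2) * ∑ i, ‖b i‖^2))
        + (1/(2*γ) + Δs/2) * ∑ S ∈ P, ‖xS S - y‖^2 := by
    rw [Finset.sum_add_distrib, Finset.sum_add_distrib, hfS_avg, zero_add,
      ← Finset.mul_sum, ← Finset.mul_sum, ← Finset.mul_sum, hvar]
  rw [hsplit2] at hsum
  have hmono : γ/2 * ((1/(s:ℝ))^2 * (((K1:ℝ) - K2) * ∑ i, ‖b i‖^2))
      ≤ γ/2 * ((1/(s:ℝ))^2 * (((K1:ℝ) - K2) * ((n:ℝ) * ζ^2))) := by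
    have h1 : ((K1:ℝ) - K2) * ∑ i, ‖b i‖^2 ≤ ((K1:ℝ) - K2) * ((n:ℝ) * ζ^2) :=
      mul_le_mul_of_nonneg_left hBn hK1K2
    have h2 : (0:ℝ) ≤ γ/2 := (half_pos hγ).le
    nlinarith [mul_le_mul_of_nonneg_left h1 (by positivity : (0:ℝ) ≤ (1/(s:ℝ))^2)]
  have hEq : (1/(n.choose s : ℝ)) * (γ/2 * ((1/(s:ℝ))^2 * (((K1:ℝ) - K2) * ((n:ℝ) * ζ^2))))
      = (((n:ℝ) - s) / ((n:ℝ) - 1)) * (γ * ζ^2 / (2*s)) := by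
    rw [div_mul_div_comm]
    rw [eq_div_iff (by positivity : ((n:ℝ)-1) * (2*s) ≠ 0)]
    field_simp
    linear_combination ζ^2 * idC
  calc (1/(n.choose s : ℝ)) * ∑ S ∈ P, (f (xS S) - (1/(s:ℝ)) * ∑ i ∈ S, f' i (xS S))
      ≤ (1/(n.choose s : ℝ)) * (γ/2 * ((1/(s:ℝ))^2 * (((K1:ℝ) - K2) * ((n:ℝ) * ζ^2)))
          + (1/(2*γ) + Δs/2) * ∑ S ∈ P, ‖xS S - y‖^2) := by
        apply mul_le_mul_of_nonneg_left _ (by positivity)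
        linarith [hsum, hmono]
    _ = (((n:ℝ) - s) / ((n:ℝ) - 1)) * (γ * ζ^2 / (2*s))
          + (1/(2*γ) + Δs/2) * ((1/(n.choose s : ℝ)) * ∑ S ∈ P, ‖xS S - y‖^2) := by
        rw [mul_add, hEq]
        ring
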